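/- Let m ≥ 6 and n ≥ 10, and let G be a subgraph of the complete bipartite graph K_{m,n} with parts X (of size m) and Y (of size n). If some vertex of X has degree at least 10 in G, then G contains K_{2,2} or the bipartite complement of G contains K_{5,5}. -/

import Mathlib

/-- A subgraph of the complete bipartite graph `K_{m,n}` is identified with its
edge set, a finset of pairs `(x, y)` with `x` in the part `X = Fin m` and
`y` in the part `Y = Fin n`.  `bContains s t E` says that the bipartite graph
with edge set `E` contains a copy of `K_{s,t}`: there are `s` distinct
vertices of `X` and `t` distinct vertices of `Y` with all pairs present. -/
def bContains {m n : ℕ} (s t : ℕ) (E : Finset (Fin m × Fin n)) : Prop :=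
  ∃ (A : Finset (Fin m)) (B : Finset (Fin n)),
    A.card = s ∧ B.card = t ∧ ∀ x ∈ A, ∀ y ∈ B, (x, y) ∈ E

/-- The bipartite complement: edge set `(X × Y) \ E`. -/
def bCompl {m n : ℕ} (E : Finset (Fin m × Fin n)) : Finset (Fin m × Fin n) :=
  Finset.univ \ E

/-- The neighborhood `N_G(x) ⊆ Y` of a vertex `x ∈ X`. -/
def bNbhd {m n : ℕ} (E : Finset (Fin m × Fin n)) (x : Fin m) : Finset (Fin n) :=
  Finset.univ.filter (fun y => (x, y) ∈ E)

/-- The degree of a vertex `x ∈ X`. -/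
def bDeg {m n : ℕ} (E : Finset (Fin m × Fin n)) (x : Fin m) : ℕ :=
  (bNbhd E x).card

/-- `Δ(G_X)`: the maximum degree over the vertices of the part `X`. -/
def bMaxDegX {m n : ℕ} (E : Finset (Fin m × Fin n)) : ℕ :=
  Finset.univ.sup (fun x => bDeg E x)

theorem stmt_1 (m n : ℕ) (hm : 6 ≤ m) (hn : 10 ≤ n)
    (E : Finset (Fin m × Fin n)) (x : Fin m) (hx : 10 ≤ bDeg E x) :
    bContains 2 2 E ∨ bContains 5 5 (bCompl E) := by
  by_cases h22 : bContains 2 2 E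
  · exact Or.inl h22
  right
  set N := bNbhd E x with hNdef
  have hNcard : 10 ≤ N.card := hx
  have hNE : ∀ y ∈ N, (x, y) ∈ E := by
    intro y hy
    simpa [hNdef, bNbhd] using hy
  -- choose 5 vertices of X other than x
  obtain ⟨A, hAsub, hAcard⟩ :
      ∃ A ⊆ (Finset.univ \ {x} : Finset (Fin m)), A.card = 5 := by
    apply Finset.exists_subset_card_eq
    rw [Finset.card_sdiff_of_subset (by simp)]
    simp only [Finset.card_univ, Fintype.card_fin, Finset.card_singleton]
    omega
  have hAne : ∀ x' ∈ A, x' ≠ x := by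
    intro x' hx'
    have := hAsub hx'
    simp at this
    exact this
  -- each such vertex has at most one neighbor in N
  have key : ∀ x' ∈ A, (N.filter (fun y => (x', y) ∈ E)).card ≤ 1 := by
    intro x' hx'A
    by_contra hgt
    push_neg at hgt
    obtain ⟨y, hy, y', hy', hne⟩ := Finset.one_lt_card.mp hgt
    simp only [Finset.mem_filter] at hy hy'
    apply h22
    refine ⟨{x, x'}, {y, y'}, ?_, ?_, ?_⟩
    · rw [Finset.card_insert_of_notMem (by simp [Ne.symm (hAne x' hx'A)])]
      simp
    · rw [Finset.card_insert_of_notMem (by simp [hne])]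
      simp
    · intro a ha b hb
      simp only [Finset.mem_insert, Finset.mem_singleton] at ha hb
      rcases ha with rfl | rfl <;> rcases hb with rfl | rfl
      · exact hNE _ hy.1
      · exact hNE _ hy'.1
      · exact hy.2
      · exact hy'.2
  -- the union of these neighbors has size at most 5
  set T := A.biUnion (fun x' => N.filter (fun y => (x', y) ∈ E)) with hTdef
  have hTcard : T.card ≤ 5 := by
    calc T.card ≤ ∑ x' ∈ A, (N.filter (fun y => (x', y) ∈ E)).card :=
          Finset.card_biUnion_le
      _ ≤ ∑ _x' ∈ A, 1 := Finset.sum_le_sum key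
      _ = 5 := by simp [hAcard]
  have hsd : 5 ≤ (N \ T).card := by
    have := Finset.le_card_sdiff T N
    omega
  obtain ⟨B, hBsub, hBcard⟩ := Finset.exists_subset_card_eq hsd
  refine ⟨A, B, hAcard, hBcard, ?_⟩
  intro a ha b hb
  have hbNT := hBsub hb
  rw [Finset.mem_sdiff] at hbNT
  simp only [bCompl, Finset.mem_sdiff, Finset.mem_univ, true_and]
  intro hab
  exact hbNT.2 (Finset.mem_biUnion.mpr ⟨a, ha, Finset.mem_filter.mpr ⟨hbNT.1, hab⟩⟩)
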